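/- arXiv:math/0511026 — 2 statements merged into one kernel-verified Lean document; each statement's English description precedes it below -/
import Mathlib

section
/- Let B be a bialgebra over a field k admitting a normalized right co-integral σ (σb = ε(b)σ, ε(σ) = 1). Then every epimorphism of right B-modules p : Z → k (k trivial via ε) splits: the map s(λ) = λ·z₁·σ, where z₁ ∈ Z is any element with p(z₁) = 1, is a right B-module morphism with p ∘ s = id_k. -/
/- STATEMENT 11: If a bialgebra B over k admits a normalized right co-integral σ
(σb = ε(b)σ, ε(σ) = 1), then every epimorphism of right B-modules p : Z → k
(k trivial via ε) splits, via s(λ) = λ·z₁·σ where p(z₁) = 1. -/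

open TensorProduct

noncomputable section

variable (k : Type*) [Field k] (B : Type*) [Ring B] [Bialgebra k B]

/-- The counit as a ring homomorphism out of `Bᵐᵒᵖ`. -/
def counitOp : Bᵐᵒᵖ →+* k :=
  RingHom.fromOpposite (Bialgebra.counitAlgHom k B).toRingHom
    (fun _ _ => mul_comm _ _)

/-- The trivial right `B`-module structure on `k`: `λ · b := ε(b)λ`. -/
instance trivialRightModule : Module Bᵐᵒᵖ k := Module.compHom k (counitOp k B)

theorem stmt11 (σ : B)
    (hσ : ∀ b : B, σ * b = (Coalgebra.counit (R := k) b) • σ)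
    (hσ1 : Coalgebra.counit (R := k) σ = (1 : k))
    (Z : Type*) [AddCommGroup Z] [Module Bᵐᵒᵖ Z]
    (p : Z →ₗ[Bᵐᵒᵖ] k) (hp : Function.Surjective p)
    (z₁ : Z) (hz₁ : p z₁ = 1) :
    ∃ s : k →ₗ[Bᵐᵒᵖ] Z,
      (∀ lam : k, s lam = (MulOpposite.op ((algebraMap k B lam) * σ)) • z₁)
      ∧ p ∘ₗ s = LinearMap.id := by
  have hsmul : ∀ (m : Bᵐᵒᵖ) (x : k), m • x = Coalgebra.counit (R := k) m.unop * x :=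
    fun m x => rfl
  have key : ∀ (m : Bᵐᵒᵖ) (lam : k),
      algebraMap k B (Coalgebra.counit (R := k) m.unop * lam) * σ
        = (algebraMap k B lam * σ) * m.unop := by
    intro m lam
    rw [mul_assoc, hσ, mul_smul_comm, Algebra.smul_def, map_mul, mul_assoc]
  refine ⟨{ toFun := fun lam => (MulOpposite.op ((algebraMap k B lam) * σ)) • z₁
            map_add' := ?_
            map_smul' := ?_ }, fun lam => rfl, ?_⟩
  · intro x y
    rw [map_add, add_mul, ← add_smul, ← MulOpposite.op_add]
  · intro m lam
    dsimp only [RingHom.id_apply]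
    rw [hsmul, key, MulOpposite.op_mul, MulOpposite.op_unop, mul_smul]
  · ext lam
    simp only [LinearMap.comp_apply, LinearMap.coe_mk, AddHom.coe_mk, LinearMap.id_apply,
      map_smul, hsmul, MulOpposite.unop_op, hz₁, mul_one, Bialgebra.counit_mul, hσ1,
      Bialgebra.counit_algebraMap]

end
end

section
/- Let B be a Hopf algebra over a field k with invertible antipode, X an anti-Yetter-Drinfeld module over B, C a B-module coalgebra, and M a B-equivariant C-bicomodule. Let CH^{tw}_n = X ⊗ M ⊗ C^{⊗n} with the B-action L_b(x ⊗ m ⊗ c¹ ⊗ ⋯ ⊗ cⁿ) = b_{(n+2)}x ⊗ b_{(1)}m ⊗ b_{(2)}c¹ ⊗ ⋯ ⊗ b_{(n+1)}cⁿ and the last face map ∂_{n+1}(x ⊗ m ⊗ c¹ ⊗ ⋯ ⊗ cⁿ) = x_{(0)} ⊗ m_{(0)} ⊗ c¹ ⊗ ⋯ ⊗ cⁿ ⊗ x_{(-1)}·m_{(-1)}. Then in k ⊗_B CH^{tw}_{*}, the commutator [L_b, ∂_{n+1}] vanishes: 1 ⊗_B ∂_{n+1}L_b(ξ) = ε(b)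 ⊗_B ∂_{n+1}(ξ) for all b ∈ B and ξ ∈ CH^{tw}_n. -/
/- STATEMENT 17: Let B be a Hopf algebra with invertible antipode, X an
anti-Yetter-Drinfeld module, C a B-module coalgebra and M a B-equivariant
C-bicomodule. On CH^{tw}_n = X ⊗ M ⊗ C^{⊗n} with the B-action
L_b(x ⊗ m ⊗ c¹ ⊗ ⋯) = b₍ₙ₊₂₎x ⊗ b₍₁₎m ⊗ b₍₂₎c¹ ⊗ ⋯ and last face
∂_{n+1}(x ⊗ m ⊗ c¹ ⊗ ⋯ ⊗ cⁿ) = x₍₀₎ ⊗ m₍₀₎ ⊗ c¹ ⊗ ⋯ ⊗ cⁿ ⊗ x₍₋₁₎·m₍₋₁₎,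
the commutator [L_b, ∂_{n+1}] vanishes in k ⊗_B CH^{tw}_*:
1 ⊗_B ∂_{n+1}L_b(ξ) = ε(b) ⊗_B ∂_{n+1}(ξ). -/

open TensorProduct

noncomputable section

universe u
variable (k : Type u) [Field k] (B : Type u) [Ring B] [HopfAlgebra k B]
variable {P Q : Type u} [AddCommGroup P] [Module k P] [AddCommGroup Q] [Module k Q]

/-- Diagonal action of `B` on `P ⊗ Q` from action maps. -/
def act2 (μ : B ⊗[k] P →ₗ[k] P) (ν : B ⊗[k] Q →ₗ[k] Q) :
    B ⊗[k] (P ⊗[k] Q) →ₗ[k] P ⊗[k] Q :=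
  (TensorProduct.map μ ν)
    ∘ₗ (TensorProduct.tensorTensorTensorComm k B B P Q).toLinearMap
    ∘ₗ (TensorProduct.map (Coalgebra.comul (R := k) (A := B)) LinearMap.id)

/-- Iterated comultiplication `b ↦ b₍₁₎ ⊗ (b₍₂₎ ⊗ b₍₃₎)`. -/
def comul3 : B →ₗ[k] B ⊗[k] (B ⊗[k] B) :=
  (TensorProduct.map (LinearMap.id : B →ₗ[k] B) (Coalgebra.comul (R := k) (A := B)))
    ∘ₗ (Coalgebra.comul (R := k) (A := B))

variable (X : Type u) [AddCommGroup X] [Module k X]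

/-- `b ⊗ x ↦ b₍₁₎ x₍₋₁₎ S'(b₍₃₎) ⊗ b₍₂₎·x₍₀₎`. -/
def aydRHS (S' : B →ₗ[k] B) (ρX : X →ₗ[k] B ⊗[k] X) (μX : B ⊗[k] X →ₗ[k] X) :
    B ⊗[k] X →ₗ[k] B ⊗[k] X :=
  (TensorProduct.map (LinearMap.mul' k B) (LinearMap.id : X →ₗ[k] X))
    ∘ₗ (TensorProduct.assoc k B B X).symm.toLinearMap
    ∘ₗ (TensorProduct.map (LinearMap.mul' k B)
          ((TensorProduct.map S' μX)
            ∘ₗ (TensorProduct.assoc k B B X).toLinearMap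
            ∘ₗ (TensorProduct.map (TensorProduct.comm k B B).toLinearMap
                  (LinearMap.id : X →ₗ[k] X))))
    ∘ₗ (TensorProduct.tensorTensorTensorComm k B (B ⊗[k] B) B X).toLinearMap
    ∘ₗ (TensorProduct.map (comul3 k B) ρX)

variable (C : Type u) [AddCommGroup C] [Module k C] [Coalgebra k C]
variable (M : Type u) [AddCommGroup M] [Module k M]

/-- `W n = M ⊗ C^{⊗n}` (bracketed to the left). -/
def W : ℕ → ModuleCat.{u} k
  | 0 => ModuleCat.of k M
  | n + 1 => ModuleCat.of k ((W n) ⊗[k] C)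

/-- The diagonal action of `B` on `W n = M ⊗ C^{⊗n}`:
`b ⊗ (m ⊗ c¹ ⊗ ⋯) ↦ b₍₁₎m ⊗ b₍₂₎c¹ ⊗ ⋯`. -/
def DW (μC : B ⊗[k] C →ₗ[k] C) (μM : B ⊗[k] M →ₗ[k] M) :
    (n : ℕ) → (B ⊗[k] (W k C M n) →ₗ[k] W k C M n)
  | 0 => μM
  | n + 1 => act2 k B (DW μC μM n) μC

/-- The full action `L` on `CH^{tw}_n = X ⊗ (M ⊗ C^{⊗n})`:
`L_b(x ⊗ w) = b₍₂₎·x ⊗ b₍₁₎·w` (so that `x` receives the last Sweedler leg). -/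
def Ltw (μX : B ⊗[k] X →ₗ[k] X) (μC : B ⊗[k] C →ₗ[k] C) (μM : B ⊗[k] M →ₗ[k] M)
    (n : ℕ) : B ⊗[k] (X ⊗[k] (W k C M n)) →ₗ[k] X ⊗[k] (W k C M n) :=
  (TensorProduct.map μX (DW k B C M μC μM n))
    ∘ₗ (TensorProduct.tensorTensorTensorComm k B B X (W k C M n)).toLinearMap
    ∘ₗ (TensorProduct.map
          ((TensorProduct.comm k B B).toLinearMap ∘ₗ (Coalgebra.comul (R := k) (A := B)))
          LinearMap.id)

/-- `m ⊗ c¹ ⊗ ⋯ ⊗ cⁿ ↦ m₍₀₎ ⊗ c¹ ⊗ ⋯ ⊗ cⁿ ⊗ m₍₋₁₎`. -/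
def lastM (ρl : M →ₗ[k] C ⊗[k] M) :
    (n : ℕ) → ((W k C M n : Type u) →ₗ[k] W k C M (n + 1))
  | 0 => (TensorProduct.comm k C M).toLinearMap ∘ₗ ρl
  | n + 1 =>
    ((TensorProduct.assoc k (W k C M n) C C).symm.toLinearMap
      ∘ₗ (TensorProduct.map (LinearMap.id : W k C M n →ₗ[k] W k C M n)
            (TensorProduct.comm k C C).toLinearMap)
      ∘ₗ (TensorProduct.assoc k (W k C M n) C C).toLinearMap)
    ∘ₗ (TensorProduct.map (lastM ρl n) (LinearMap.id : C →ₗ[k] C))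

/-- The last face of the twisted Cartier–Hochschild complex:
`∂_{n+1}(x ⊗ m ⊗ c¹ ⊗ ⋯ ⊗ cⁿ) = x₍₀₎ ⊗ m₍₀₎ ⊗ c¹ ⊗ ⋯ ⊗ cⁿ ⊗ x₍₋₁₎·m₍₋₁₎`. -/
def dLast (μC : B ⊗[k] C →ₗ[k] C) (ρX : X →ₗ[k] B ⊗[k] X) (ρl : M →ₗ[k] C ⊗[k] M)
    (n : ℕ) : X ⊗[k] (W k C M n) →ₗ[k] X ⊗[k] (W k C M (n + 1)) :=
  (TensorProduct.assoc k X (W k C M n) C).toLinearMap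
    ∘ₗ (TensorProduct.comm k C (X ⊗[k] (W k C M n))).toLinearMap
    ∘ₗ (TensorProduct.map μC (LinearMap.id : X ⊗[k] (W k C M n) →ₗ[k] X ⊗[k] (W k C M n)))
    ∘ₗ (TensorProduct.tensorTensorTensorComm k B X C (W k C M n)).toLinearMap
    ∘ₗ (TensorProduct.map (LinearMap.id : B ⊗[k] X →ₗ[k] B ⊗[k] X)
          (TensorProduct.comm k (W k C M n) C).toLinearMap)
    ∘ₗ (TensorProduct.map ρX (lastM k C M ρl n))

/-- The coinvariance relations defining `k ⊗_B CH^{tw}_n`. -/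
def coinvTw (μX : B ⊗[k] X →ₗ[k] X) (μC : B ⊗[k] C →ₗ[k] C) (μM : B ⊗[k] M →ₗ[k] M)
    (n : ℕ) : Submodule k (X ⊗[k] (W k C M n)) :=
  Submodule.span k
    {z | ∃ (b : B) (ξ : X ⊗[k] (W k C M n)),
      z = Ltw k B X C M μX μC μM n (b ⊗ₜ[k] ξ) - (Coalgebra.counit (R := k) b) • ξ}

section Conv
variable (k : Type u) [Field k]
variable {C A : Type u} [AddCommGroup C] [Module k C] [Coalgebra k C]
  [Ring A] [Algebra k A]

/-- Convolution product on `Hom(C, A)`. -/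
def conv (f g : C →ₗ[k] A) : C →ₗ[k] A :=
  LinearMap.mul' k A ∘ₗ TensorProduct.map f g ∘ₗ Coalgebra.comul (R := k)

/-- Convolution unit. -/
def convOne : C →ₗ[k] A := Algebra.linearMap k A ∘ₗ Coalgebra.counit (R := k)

lemma conv_apply (f g : C →ₗ[k] A) (c : C) :
    conv k f g c = LinearMap.mul' k A (TensorProduct.map f g (Coalgebra.comul (R := k) c)) := rfl

lemma conv_one_right (f : C →ₗ[k] A) : conv k f (convOne k) = f := by
  ext c
  have key : ∀ y : C ⊗[k] C,
      LinearMap.mul' k A (TensorProduct.map f (convOne k (A := A)) y)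
        = f ((TensorProduct.rid k C) ((LinearMap.lTensor C (Coalgebra.counit (R := k))) y)) := by
    intro y
    induction y using TensorProduct.induction_on with
    | zero => simp
    | tmul c1 c2 =>
        simp [convOne, Algebra.algebraMap_eq_smul_one, Algebra.mul_smul_comm]
    | add y1 y2 h1 h2 => simp only [map_add, h1, h2]
  simp only [conv_apply, key, Coalgebra.lTensor_counit_comul, TensorProduct.rid_tmul, one_smul]

lemma conv_one_left (f : C →ₗ[k] A) : conv k (convOne k) f = f := by
  ext c
  have key : ∀ y : C ⊗[k] C,
      LinearMap.mul' k A (TensorProduct.map (convOne k (A := A)) f y)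
        = f ((TensorProduct.lid k C) ((LinearMap.rTensor C (Coalgebra.counit (R := k))) y)) := by
    intro y
    induction y using TensorProduct.induction_on with
    | zero => simp
    | tmul c1 c2 =>
        simp [convOne, Algebra.algebraMap_eq_smul_one, Algebra.smul_mul_assoc]
    | add y1 y2 h1 h2 => simp only [map_add, h1, h2]
  simp only [conv_apply, key, Coalgebra.rTensor_counit_comul, TensorProduct.lid_tmul, one_smul]

lemma conv_assoc (f g h : C →ₗ[k] A) :
    conv k (conv k f g) h = conv k f (conv k g h) := by
  ext c
  have c2 : ∀ y : C ⊗[k] C,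
      LinearMap.mul' k A (TensorProduct.map (conv k f g) h y)
        = (LinearMap.mul' k A ∘ₗ TensorProduct.map (LinearMap.mul' k A ∘ₗ TensorProduct.map f g) h)
            ((LinearMap.rTensor C (Coalgebra.comul (R := k))) y) := by
    intro y
    induction y using TensorProduct.induction_on with
    | zero => simp
    | tmul c1 c3 => simp [conv_apply]
    | add y1 y2 h1 h2 => simp only [map_add, h1, h2]
  have c1 : ∀ y : C ⊗[k] C,
      LinearMap.mul' k A (TensorProduct.map f (conv k g h) y)
        = (LinearMap.mul' k A ∘ₗ TensorProduct.map f (LinearMap.mul' k A ∘ₗ TensorProduct.map g h))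
            ((LinearMap.lTensor C (Coalgebra.comul (R := k))) y) := by
    intro y
    induction y using TensorProduct.induction_on with
    | zero => simp
    | tmul c1 c3 => simp [conv_apply]
    | add y1 y2 h1 h2 => simp only [map_add, h1, h2]
  have c3 : ∀ u : C ⊗[k] (C ⊗[k] C),
      (LinearMap.mul' k A ∘ₗ TensorProduct.map (LinearMap.mul' k A ∘ₗ TensorProduct.map f g) h)
          ((TensorProduct.assoc k C C C).symm u)
        = (LinearMap.mul' k A ∘ₗ TensorProduct.map f (LinearMap.mul' k A ∘ₗ TensorProduct.map g h)) u := by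
    intro u
    induction u using TensorProduct.induction_on with
    | zero => simp
    | tmul x z =>
        induction z using TensorProduct.induction_on with
        | zero => simp
        | tmul y w => simp [mul_assoc]
        | add z1 z2 h1 h2 => simp only [tmul_add, map_add, h1, h2]
    | add u1 u2 h1 h2 => simp only [map_add, h1, h2]
  have co3 : (LinearMap.rTensor C (Coalgebra.comul (R := k))) (Coalgebra.comul (R := k) c)
      = (TensorProduct.assoc k C C C).symm
          ((LinearMap.lTensor C (Coalgebra.comul (R := k))) (Coalgebra.comul (R := k) c)) :=
    (Coalgebra.coassoc_symm_apply (R := k) c).symm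
  simp only [conv_apply, c2, c1, co3, c3]

end Conv

section Anti
variable (k : Type u) [Field k] (B : Type u) [Ring B] [HopfAlgebra k B]

local notation "S" => HopfAlgebra.antipode (R := k) (A := B)
local notation "Δ" => Coalgebra.comul (R := k) (A := B)
local notation "ε" => Coalgebra.counit (R := k) (A := B)
local notation "mulB" => LinearMap.mul' k B

lemma antipode_one' : S (1 : B) = 1 := by
  have := HopfAlgebra.mul_antipode_rTensor_comul_apply (R := k) (A := B) (1 : B)
  simpa [Algebra.TensorProduct.one_def] using this

/-- `F : B ⊗ B → B`, `a ⊗ b ↦ S(ab)`. -/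
def Fmap : B ⊗[k] B →ₗ[k] B := S ∘ₗ mulB

/-- `G : B ⊗ B → B`, `a ⊗ b ↦ S(b)S(a)`. -/
def Gmap : B ⊗[k] B →ₗ[k] B :=
  mulB ∘ₗ TensorProduct.map S S ∘ₗ (TensorProduct.comm k B B).toLinearMap

lemma conv_mul_F : conv k (mulB) (Fmap k B) = convOne k := by
  apply TensorProduct.ext'
  intro a b
  have hmm : ∀ u v : B ⊗[k] B,
      (TensorProduct.map (mulB) (mulB))
          ((TensorProduct.tensorTensorTensorComm k B B B B) (u ⊗ₜ v)) = u * v := by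
    intro u v
    induction u using TensorProduct.induction_on with
    | zero => simp
    | tmul a1 a2 =>
        induction v using TensorProduct.induction_on with
        | zero => simp
        | tmul b1 b2 => simp [Algebra.TensorProduct.tmul_mul_tmul]
        | add v1 v2 h1 h2 => simp only [tmul_add, map_add, mul_add, h1, h2]
    | add u1 u2 h1 h2 => simp only [add_tmul, map_add, add_mul, h1, h2]
  have hF : TensorProduct.map (mulB) (Fmap k B)
      = TensorProduct.map LinearMap.id S ∘ₗ TensorProduct.map (mulB) (mulB) := by
    rw [← TensorProduct.map_comp]; rfl
  calc conv k (mulB) (Fmap k B) (a ⊗ₜ b)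
      = LinearMap.mul' k B ((TensorProduct.map LinearMap.id S)
          ((TensorProduct.map (mulB) (mulB))
            ((TensorProduct.tensorTensorTensorComm k B B B B) ((Δ a) ⊗ₜ (Δ b))))) := by
        simp [conv_apply, hF, TensorProduct.AlgebraTensorModule.tensorTensorTensorComm_eq]
    _ = LinearMap.mul' k B ((LinearMap.lTensor B S) (Δ (a * b))) := by
        rw [hmm, ← Bialgebra.comul_mul]; rfl
    _ = convOne k (a ⊗ₜ b) := by
        rw [HopfAlgebra.mul_antipode_lTensor_comul_apply]
        simp [convOne]
        exact Algebra.commutes _ _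

/-- `m ⊗ (b1 ⊗ b2) ↦ S b1 * m * b2`. -/
def Tmap : B ⊗[k] (B ⊗[k] B) →ₗ[k] B :=
  mulB ∘ₗ TensorProduct.map (mulB ∘ₗ TensorProduct.map S LinearMap.id
      ∘ₗ (TensorProduct.comm k B B).toLinearMap) LinearMap.id
    ∘ₗ (TensorProduct.assoc k B B B).symm.toLinearMap

lemma Tmap_tmul (m b1 b2 : B) : Tmap k B (m ⊗ₜ (b1 ⊗ₜ b2)) = (S b1 * m) * b2 := by
  simp [Tmap]

lemma conv_G_mul : conv k (Gmap k B) (mulB) = convOne k := by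
  apply TensorProduct.ext'
  intro a b
  have claim1 : ∀ u v : B ⊗[k] B,
      LinearMap.mul' k B ((TensorProduct.map (Gmap k B) (mulB))
          ((TensorProduct.tensorTensorTensorComm k B B B B) (u ⊗ₜ v)))
        = Tmap k B ((LinearMap.mul' k B ((LinearMap.rTensor B S) u)) ⊗ₜ v) := by
    intro u v
    induction u using TensorProduct.induction_on with
    | zero => simp
    | tmul a1 a2 =>
        induction v using TensorProduct.induction_on with
        | zero => simp
        | tmul b1 b2 => simp [Gmap, Tmap_tmul, mul_assoc]
        | add v1 v2 h1 h2 => simp only [tmul_add, map_add, h1, h2]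
    | add u1 u2 h1 h2 => simp only [add_tmul, map_add]; rw [h1, h2]
  have claim2 : ∀ v : B ⊗[k] B,
      Tmap k B ((1 : B) ⊗ₜ v) = LinearMap.mul' k B ((LinearMap.rTensor B S) v) := by
    intro v
    induction v using TensorProduct.induction_on with
    | zero => simp
    | tmul b1 b2 => simp [Tmap_tmul]
    | add v1 v2 h1 h2 => simp only [tmul_add, map_add, h1, h2]
  calc conv k (Gmap k B) (mulB) (a ⊗ₜ b)
      = Tmap k B ((LinearMap.mul' k B ((LinearMap.rTensor B S) (Δ a))) ⊗ₜ (Δ b)) := by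
        simp [conv_apply, TensorProduct.AlgebraTensorModule.tensorTensorTensorComm_eq, claim1]
    _ = (ε a) • Tmap k B ((1 : B) ⊗ₜ (Δ b)) := by
        rw [HopfAlgebra.mul_antipode_rTensor_comul_apply, Algebra.algebraMap_eq_smul_one,
          ← smul_tmul', map_smul]
    _ = convOne k (a ⊗ₜ b) := by
        rw [claim2, HopfAlgebra.mul_antipode_rTensor_comul_apply, Algebra.algebraMap_eq_smul_one]
        simp [convOne, smul_smul,
          Algebra.algebraMap_eq_smul_one, mul_comm]

lemma F_eq_G : Fmap k B = Gmap k B := by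
  have h1 := conv_mul_F k B
  have h2 := conv_G_mul k B
  calc Fmap k B = conv k (convOne k) (Fmap k B) := (conv_one_left k _).symm
    _ = conv k (conv k (Gmap k B) (mulB)) (Fmap k B) := by rw [h2]
    _ = conv k (Gmap k B) (conv k (mulB) (Fmap k B)) := conv_assoc k _ _ _
    _ = conv k (Gmap k B) (convOne k) := by rw [h1]
    _ = Gmap k B := conv_one_right k _

lemma antipode_mul' (a b : B) : S (a * b) = S b * S a := by
  have := congrArg (fun f => f (a ⊗ₜ[k] b)) (F_eq_G k B)
  simpa [Fmap, Gmap] using this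

lemma keyS (S' : B →ₗ[k] B)
    (hS'l : S' ∘ₗ (HopfAlgebra.antipode (R := k) (A := B)) = LinearMap.id)
    (hS'r : (HopfAlgebra.antipode (R := k) (A := B)) ∘ₗ S' = LinearMap.id) (b : B) :
    LinearMap.mul' k B ((TensorProduct.map S' LinearMap.id)
        ((TensorProduct.comm k B B) (Δ b))) = (ε b) • (1 : B) := by
  have hS'r' : ∀ x : B, S (S' x) = x := fun x => congrArg (fun f => f x) hS'r
  have hS'l' : ∀ x : B, S' (S x) = x := fun x => congrArg (fun f => f x) hS'l
  have hkey : ∀ y : B ⊗[k] B,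
      S (LinearMap.mul' k B ((TensorProduct.map S' LinearMap.id)
          ((TensorProduct.comm k B B) y)))
        = LinearMap.mul' k B ((LinearMap.rTensor B S) y) := by
    intro y
    induction y using TensorProduct.induction_on with
    | zero => simp
    | tmul b1 b2 => simp [antipode_mul', hS'r']
    | add y1 y2 h1 h2 => simp only [map_add, h1, h2]
  have h1 := hkey (Δ b)
  rw [HopfAlgebra.mul_antipode_rTensor_comul_apply, Algebra.algebraMap_eq_smul_one] at h1
  have := congrArg S' h1
  rw [hS'l'] at this
  have hS'1 : S' (1 : B) = 1 := by
    have h2 := hS'l' 1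
    rwa [antipode_one' k B] at h2
  rw [this, map_smul, hS'1]

end Anti

section Aux

variable {k B C M}
set_option maxHeartbeats 1000000
set_option synthInstance.maxHeartbeats 200000
attribute [reducible] W

/-- Swap the last two `C`-factors of `(P ⊗ C) ⊗ C`. -/
def swLast (P : Type u) [AddCommGroup P] [Module k P] :
    ((P ⊗[k] C) ⊗[k] C) →ₗ[k] ((P ⊗[k] C) ⊗[k] C) :=
  (TensorProduct.assoc k P C C).symm.toLinearMap
    ∘ₗ (TensorProduct.map (LinearMap.id : P →ₗ[k] P)
          (TensorProduct.comm k C C).toLinearMap)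
    ∘ₗ (TensorProduct.assoc k P C C).toLinearMap

@[simp] lemma swLast_tmul (P : Type u) [AddCommGroup P] [Module k P]
    (p : P) (c c' : C) : swLast (k := k) P ((p ⊗ₜ c) ⊗ₜ c') = (p ⊗ₜ c') ⊗ₜ c := by
  simp [swLast]

/-- `((a ⊗ b) ⊗ d) ⊗ ((w' ⊗ c') ⊗ c) ↦ (f (a ⊗ w') ⊗ μC (b ⊗ c)) wait` -/
def Epair {P : Type u} [AddCommGroup P] [Module k P]
    (f : B ⊗[k] P →ₗ[k] P) (μC : B ⊗[k] C →ₗ[k] C) :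
    ((B ⊗[k] B) ⊗[k] B) ⊗[k] ((P ⊗[k] C) ⊗[k] C) →ₗ[k] ((P ⊗[k] C) ⊗[k] C) :=
  swLast P
    ∘ₗ (TensorProduct.map (TensorProduct.map f μC) μC)
    ∘ₗ (TensorProduct.map (TensorProduct.tensorTensorTensorComm k B B P C).toLinearMap LinearMap.id)
    ∘ₗ (TensorProduct.tensorTensorTensorComm k (B ⊗[k] B) B (P ⊗[k] C) C).toLinearMap

@[simp] lemma Epair_tmul {P : Type u} [AddCommGroup P] [Module k P]
    (f : B ⊗[k] P →ₗ[k] P) (μC : B ⊗[k] C →ₗ[k] C)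
    (a b d : B) (w' : P) (c' c : C) :
    Epair f μC (((a ⊗ₜ b) ⊗ₜ d) ⊗ₜ ((w' ⊗ₜ c') ⊗ₜ c))
      = (f (a ⊗ₜ w') ⊗ₜ μC (d ⊗ₜ c)) ⊗ₜ μC (b ⊗ₜ c') := by
  simp [Epair]

lemma lemA (μC : B ⊗[k] C →ₗ[k] C) (μM : B ⊗[k] M →ₗ[k] M) (ρl : M →ₗ[k] C ⊗[k] M)
    (hMequiL : ρl ∘ₗ μM
        = act2 k B μC μM ∘ₗ (TensorProduct.map (LinearMap.id : B →ₗ[k] B) ρl)) :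
    ∀ (n : ℕ) (b : B) (w : W k C M n),
      lastM k C M ρl n (DW k B C M μC μM n (b ⊗ₜ w))
        = (TensorProduct.map (DW k B C M μC μM n) μC)
            ((TensorProduct.tensorTensorTensorComm k B B (W k C M n) C)
              (((TensorProduct.comm k B B) (Coalgebra.comul (R := k) b))
                ⊗ₜ (lastM k C M ρl n w))) := by
  intro n
  induction n with
  | zero =>
      intro b w
      have hpt : ρl (μM (b ⊗ₜ w))
          = (TensorProduct.map μC μM)
              ((TensorProduct.tensorTensorTensorComm k B B C M)
                ((Coalgebra.comul (R := k) b) ⊗ₜ (ρl w))) := by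
        have := congrArg (fun f => f (b ⊗ₜ[k] w)) hMequiL
        simpa [act2] using this
      show (TensorProduct.comm k C M).toLinearMap (ρl (μM (b ⊗ₜ w)))
          = (TensorProduct.map μM μC)
              ((TensorProduct.tensorTensorTensorComm k B B M C)
                (((TensorProduct.comm k B B) (Coalgebra.comul (R := k) b))
                  ⊗ₜ ((TensorProduct.comm k C M).toLinearMap (ρl w))))
      rw [hpt]
      generalize Coalgebra.comul (R := k) b = y
      generalize (ρl w : C ⊗[k] M) = t
      induction y using TensorProduct.induction_on with
      | zero => simp
      | tmul b1 b2 =>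
          induction t using TensorProduct.induction_on with
          | zero => simp
          | tmul c m => simp
          | add t1 t2 h1 h2 => simp only [tmul_add, map_add, h1, h2]
      | add y1 y2 h1 h2 => simp only [add_tmul, map_add, h1, h2]
  | succ n IH =>
      intro b z
      show lastM k C M ρl (n+1) (DW k B C M μC μM (n+1) (b ⊗ₜ z)) = _
      induction z using TensorProduct.induction_on with
      | zero => simp
      | tmul w c =>
          have co3 : (TensorProduct.map (Coalgebra.comul (R := k) (A := B)) LinearMap.id)
              (Coalgebra.comul (R := k) b)
              = (TensorProduct.assoc k B B B).symm
                  ((TensorProduct.map LinearMap.id (Coalgebra.comul (R := k) (A := B)))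
                    (Coalgebra.comul (R := k) b)) := by
            have h := Coalgebra.coassoc_symm_apply (R := k) (A := B) b
            simpa [LinearMap.rTensor, LinearMap.lTensor] using h.symm
          have H1 : ∀ y : B ⊗[k] B,
              lastM k C M ρl (n+1) ((TensorProduct.map (DW k B C M μC μM n) μC)
                  ((TensorProduct.tensorTensorTensorComm k B B (W k C M n) C) (y ⊗ₜ (w ⊗ₜ c))))
                = Epair (DW k B C M μC μM n) μC
                    (((TensorProduct.map ((TensorProduct.comm k B B).toLinearMap
                        ∘ₗ Coalgebra.comul (R := k)) (LinearMap.id : B →ₗ[k] B)) y)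
                      ⊗ₜ ((lastM k C M ρl n w) ⊗ₜ c)) := by
            intro y
            induction y using TensorProduct.induction_on with
            | zero => simp
            | tmul b1 b2 =>
                simp only [TensorProduct.tensorTensorTensorComm_tmul, TensorProduct.map_tmul,
                  LinearMap.comp_apply, LinearMap.id_coe, id_eq, LinearEquiv.coe_coe]
                rw [show lastM k C M ρl (n+1)
                      ((DW k B C M μC μM n (b1 ⊗ₜ w)) ⊗ₜ (μC (b2 ⊗ₜ c)))
                    = swLast (k := k) (W k C M n : Type u)
                        ((lastM k C M ρl n (DW k B C M μC μM n (b1 ⊗ₜ w)))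
                          ⊗ₜ (μC (b2 ⊗ₜ c))) from rfl]
                rw [IH b1 w]
                generalize (TensorProduct.comm k B B) (Coalgebra.comul (R := k) b1) = y1
                generalize (lastM k C M ρl n w :
                    (W k C M n : Type u) ⊗[k] C) = s
                induction y1 using TensorProduct.induction_on with
                | zero => simp
                | tmul p q =>
                    induction s using TensorProduct.induction_on with
                    | zero => simp
                    | tmul w' c' => simp
                    | add s1 s2 h1 h2 => simp only [tmul_add, add_tmul, map_add, h1, h2]
                | add p q h1 h2 => simp only [tmul_add, add_tmul, map_add, h1, h2]
            | add y1 y2 h1 h2 => simp only [add_tmul, map_add, h1, h2]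
          have H2 : ∀ y : B ⊗[k] B,
              (TensorProduct.map (DW k B C M μC μM (n+1)) μC)
                  ((TensorProduct.tensorTensorTensorComm k B B (W k C M (n+1)) C)
                    (((TensorProduct.comm k B B) y) ⊗ₜ (lastM k C M ρl (n+1) (w ⊗ₜ c))))
                = Epair (DW k B C M μC μM n) μC
                    (((TensorProduct.map (TensorProduct.comm k B B).toLinearMap LinearMap.id)
                        ((TensorProduct.assoc k B B B).symm
                          ((TensorProduct.map LinearMap.id (Coalgebra.comul (R := k) (A := B))) y)))
                      ⊗ₜ ((lastM k C M ρl n w) ⊗ₜ c)) := by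
            intro y
            rw [show lastM k C M ρl (n+1) (w ⊗ₜ c)
                = swLast (k := k) (W k C M n : Type u)
                    ((lastM k C M ρl n w) ⊗ₜ c) from rfl]
            induction y using TensorProduct.induction_on with
            | zero => simp
            | tmul b1 b2 =>
                simp only [TensorProduct.map_tmul, LinearMap.comp_apply, LinearMap.id_coe, id_eq,
                  LinearEquiv.coe_coe, TensorProduct.comm_tmul]
                generalize (lastM k C M ρl n w :
                    (W k C M n : Type u) ⊗[k] C) = s
                induction s using TensorProduct.induction_on with
                | zero => simp
                | tmul w' c' =>
                    simp only [swLast_tmul, TensorProduct.tensorTensorTensorComm_tmul,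
                      TensorProduct.map_tmul]
                    rw [show DW k B C M μC μM (n+1) (b2 ⊗ₜ (w' ⊗ₜ c))
                        = (TensorProduct.map (DW k B C M μC μM n) μC)
                            ((TensorProduct.tensorTensorTensorComm k B B (W k C M n) C)
                              ((Coalgebra.comul (R := k) b2) ⊗ₜ (w' ⊗ₜ c))) from rfl]
                    generalize (Coalgebra.comul (R := k) b2 : B ⊗[k] B) = y2
                    induction y2 using TensorProduct.induction_on with
                    | zero => simp
                    | tmul e1 e2 => simp
                    | add p q h1 h2 => simp only [tmul_add, add_tmul, map_add, h1, h2]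
                | add s1 s2 h1 h2 => simp only [tmul_add, add_tmul, map_add, h1, h2]
            | add y1 y2 h1 h2 => simp only [add_tmul, map_add, h1, h2]
          rw [show DW k B C M μC μM (n+1) (b ⊗ₜ (w ⊗ₜ c))
              = (TensorProduct.map (DW k B C M μC μM n) μC)
                  ((TensorProduct.tensorTensorTensorComm k B B (W k C M n) C)
                    ((Coalgebra.comul (R := k) b) ⊗ₜ (w ⊗ₜ c))) from rfl]
          rw [H1 (Coalgebra.comul (R := k) b), H2 (Coalgebra.comul (R := k) b)]
          have hmc : (TensorProduct.map ((TensorProduct.comm k B B).toLinearMap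
                ∘ₗ Coalgebra.comul (R := k)) (LinearMap.id : B →ₗ[k] B))
              = (TensorProduct.map (TensorProduct.comm k B B).toLinearMap LinearMap.id)
                  ∘ₗ (TensorProduct.map (Coalgebra.comul (R := k)) (LinearMap.id : B →ₗ[k] B)) := by
            rw [← TensorProduct.map_comp, LinearMap.id_comp]
          rw [hmc, LinearMap.comp_apply, co3]
      | add z1 z2 h1 h2 =>
          simp only [tmul_add, map_add, h1, h2]

variable {X : Type u} [AddCommGroup X] [Module k X]

/-- `a ⊗ v ↦ v * a`. -/
def mulrev : B ⊗[k] B →ₗ[k] B :=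
  LinearMap.mul' k B ∘ₗ (TensorProduct.comm k B B).toLinearMap

/-- `a ⊗ (x ⊗ w) ↦ x₍₀₎ ⊗ w' ⊗ (x₍₋₁₎ * a)·c'`. -/
def Phi (μC : B ⊗[k] C →ₗ[k] C) (ρX : X →ₗ[k] B ⊗[k] X) (ρl : M →ₗ[k] C ⊗[k] M) (n : ℕ) :
    B ⊗[k] (X ⊗[k] (W k C M n)) →ₗ[k] X ⊗[k] (W k C M (n + 1)) :=
  (TensorProduct.assoc k X (W k C M n) C).toLinearMap
    ∘ₗ (TensorProduct.map LinearMap.id μC)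
    ∘ₗ (TensorProduct.tensorTensorTensorComm k X B (W k C M n) C).toLinearMap
    ∘ₗ (TensorProduct.map ((TensorProduct.comm k B X).toLinearMap
          ∘ₗ (TensorProduct.map (mulrev (k := k) (B := B)) LinearMap.id)
          ∘ₗ (TensorProduct.assoc k B B X).symm.toLinearMap) LinearMap.id)
    ∘ₗ (TensorProduct.assoc k B (B ⊗[k] X) ((W k C M n) ⊗[k] C)).symm.toLinearMap
    ∘ₗ (TensorProduct.map LinearMap.id (TensorProduct.map ρX (lastM k C M ρl n)))

lemma Phi_tmul (μC : B ⊗[k] C →ₗ[k] C) (ρX : X →ₗ[k] B ⊗[k] X) (ρl : M →ₗ[k] C ⊗[k] M)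
    (n : ℕ) (a : B) (x : X) (w : W k C M n) :
    Phi (k := k) μC ρX ρl n (a ⊗ₜ (x ⊗ₜ w))
      = (TensorProduct.assoc k X (W k C M n) C)
          ((TensorProduct.map LinearMap.id μC)
            ((TensorProduct.tensorTensorTensorComm k X B (W k C M n) C)
              ((TensorProduct.map ((TensorProduct.comm k B X).toLinearMap
                  ∘ₗ (TensorProduct.map (mulrev (k := k) (B := B)) LinearMap.id)
                  ∘ₗ (TensorProduct.assoc k B B X).symm.toLinearMap) LinearMap.id)
                ((TensorProduct.assoc k B (B ⊗[k] X) ((W k C M n) ⊗[k] C)).symm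
                  (a ⊗ₜ ((ρX x) ⊗ₜ (lastM k C M ρl n w))))))) := rfl

lemma Phi_tmul_pure (μC : B ⊗[k] C →ₗ[k] C) (ρX : X →ₗ[k] B ⊗[k] X) (ρl : M →ₗ[k] C ⊗[k] M)
    (n : ℕ) (a v : B) (x' : X) (w' : W k C M n) (c' : C) :
    (TensorProduct.assoc k X (W k C M n) C)
          ((TensorProduct.map LinearMap.id μC)
            ((TensorProduct.tensorTensorTensorComm k X B (W k C M n) C)
              ((TensorProduct.map ((TensorProduct.comm k B X).toLinearMap
                  ∘ₗ (TensorProduct.map (mulrev (k := k) (B := B)) LinearMap.id)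
                  ∘ₗ (TensorProduct.assoc k B B X).symm.toLinearMap) LinearMap.id)
                ((TensorProduct.assoc k B (B ⊗[k] X) ((W k C M n) ⊗[k] C)).symm
                  (a ⊗ₜ ((v ⊗ₜ x') ⊗ₜ (w' ⊗ₜ c')))))))
      = x' ⊗ₜ (w' ⊗ₜ μC ((v * a) ⊗ₜ c')) := by
  simp [mulrev]

/-- `u1 ⊗ (u2 ⊗ u3) ↦ u2 ⊗ (S' u3 * u1)`. -/
def nuMap (S' : B →ₗ[k] B) : B ⊗[k] (B ⊗[k] B) →ₗ[k] B ⊗[k] B :=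
  (TensorProduct.map LinearMap.id (LinearMap.mul' k B ∘ₗ TensorProduct.map S' LinearMap.id))
    ∘ₗ (TensorProduct.assoc k B B B).toLinearMap
    ∘ₗ (TensorProduct.comm k B (B ⊗[k] B)).toLinearMap

@[simp] lemma nuMap_tmul (S' : B →ₗ[k] B) (u1 u2 u3 : B) :
    nuMap (k := k) S' (u1 ⊗ₜ (u2 ⊗ₜ u3)) = u2 ⊗ₜ (S' u3 * u1) := by
  simp [nuMap]

/-- `Θ : (u1 ⊗ (u2 ⊗ u3)) ⊗ ξ ↦ L_{u2} (Φ ((S' u3 * u1) ⊗ ξ))`. -/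
def Theta (S' : B →ₗ[k] B) (μX : B ⊗[k] X →ₗ[k] X) (μC : B ⊗[k] C →ₗ[k] C)
    (μM : B ⊗[k] M →ₗ[k] M) (ρX : X →ₗ[k] B ⊗[k] X) (ρl : M →ₗ[k] C ⊗[k] M) (n : ℕ) :
    (B ⊗[k] (B ⊗[k] B)) ⊗[k] (X ⊗[k] (W k C M n)) →ₗ[k] X ⊗[k] (W k C M (n + 1)) :=
  Ltw k B X C M μX μC μM (n + 1)
    ∘ₗ (TensorProduct.map LinearMap.id (Phi (k := k) μC ρX ρl n))
    ∘ₗ (TensorProduct.assoc k B B (X ⊗[k] (W k C M n))).toLinearMap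
    ∘ₗ (TensorProduct.map (nuMap (k := k) S') LinearMap.id)

/-- `α : ((u1 ⊗ h) ⊗ (v ⊗ x')) ↦ (u1 * (v * h)) ⊗ x'`. -/
def alphaMap : (B ⊗[k] B) ⊗[k] (B ⊗[k] X) →ₗ[k] B ⊗[k] X :=
  (TensorProduct.map (LinearMap.mul' k B) LinearMap.id)
    ∘ₗ (TensorProduct.assoc k B B X).symm.toLinearMap
    ∘ₗ (TensorProduct.map LinearMap.id (TensorProduct.map (LinearMap.mul' k B) LinearMap.id))
    ∘ₗ (TensorProduct.map LinearMap.id (TensorProduct.assoc k B B X).symm.toLinearMap)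
    ∘ₗ (TensorProduct.assoc k B B (B ⊗[k] X)).toLinearMap
    ∘ₗ (TensorProduct.tensorTensorTensorComm k B B B X).toLinearMap

@[simp] lemma alphaMap_tmul (u1 h v : B) (x' : X) :
    alphaMap (k := k) ((u1 ⊗ₜ h) ⊗ₜ (v ⊗ₜ x')) = (u1 * (v * h)) ⊗ₜ x' := by
  simp [alphaMap]

/-- `κ' : p ⊗ (q ⊗ (u1 ⊗ (u2 ⊗ u3))) ↦ (u1 ⊗ (S' u3 * p)) ⊗ (q ⊗ u2)`. -/
def kappaMap (S' : B →ₗ[k] B) :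
    B ⊗[k] (B ⊗[k] (B ⊗[k] (B ⊗[k] B))) →ₗ[k] (B ⊗[k] B) ⊗[k] (B ⊗[k] B) :=
  (TensorProduct.map (TensorProduct.map LinearMap.id
        (LinearMap.mul' k B ∘ₗ TensorProduct.map S' LinearMap.id))
      (TensorProduct.comm k B B).toLinearMap)
    ∘ₗ (TensorProduct.tensorTensorTensorComm k B B (B ⊗[k] B) B).toLinearMap
    ∘ₗ (TensorProduct.assoc k (B ⊗[k] B) (B ⊗[k] B) B).toLinearMap
    ∘ₗ (TensorProduct.map (TensorProduct.assoc k B B (B ⊗[k] B)).symm.toLinearMap LinearMap.id)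
    ∘ₗ (TensorProduct.comm k B (B ⊗[k] (B ⊗[k] (B ⊗[k] B)))).toLinearMap
    ∘ₗ (TensorProduct.map LinearMap.id (TensorProduct.map LinearMap.id
          (TensorProduct.assoc k B B B).toLinearMap))
    ∘ₗ (TensorProduct.map LinearMap.id (TensorProduct.assoc k B (B ⊗[k] B) B).toLinearMap)
    ∘ₗ (TensorProduct.assoc k B (B ⊗[k] (B ⊗[k] B)) B).toLinearMap
    ∘ₗ (TensorProduct.comm k B (B ⊗[k] (B ⊗[k] (B ⊗[k] B)))).toLinearMap

@[simp] lemma kappaMap_tmul (S' : B →ₗ[k] B) (p q u1 u2 u3 : B) :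
    kappaMap (k := k) S' (p ⊗ₜ (q ⊗ₜ (u1 ⊗ₜ (u2 ⊗ₜ u3))))
      = (u1 ⊗ₜ (S' u3 * p)) ⊗ₜ (q ⊗ₜ u2) := by
  simp [kappaMap]

/-- `ω`. -/
def omegaMap (S' : B →ₗ[k] B) :
    (B ⊗[k] (B ⊗[k] (B ⊗[k] (B ⊗[k] B)))) ⊗[k] (B ⊗[k] X)
      →ₗ[k] (B ⊗[k] X) ⊗[k] (B ⊗[k] B) :=
  (TensorProduct.comm k (B ⊗[k] B) (B ⊗[k] X)).toLinearMap
    ∘ₗ (TensorProduct.tensorTensorTensorComm k B B B X).toLinearMap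
    ∘ₗ (TensorProduct.map LinearMap.id (alphaMap (k := k)))
    ∘ₗ (TensorProduct.assoc k (B ⊗[k] B) (B ⊗[k] B) (B ⊗[k] X)).toLinearMap
    ∘ₗ (TensorProduct.map (TensorProduct.comm k (B ⊗[k] B) (B ⊗[k] B)).toLinearMap LinearMap.id)
    ∘ₗ (TensorProduct.map (kappaMap (k := k) S') LinearMap.id)

@[simp] lemma omegaMap_tmul (S' : B →ₗ[k] B) (p q u1 u2 u3 v : B) (x' : X) :
    omegaMap (k := k) S' ((p ⊗ₜ (q ⊗ₜ (u1 ⊗ₜ (u2 ⊗ₜ u3)))) ⊗ₜ (v ⊗ₜ x'))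
      = (u2 ⊗ₜ x') ⊗ₜ (q ⊗ₜ (u1 * (v * (S' u3 * p)))) := by
  simp [omegaMap]

/-- `Ψ`. -/
def Psi (S' : B →ₗ[k] B) (μX : B ⊗[k] X →ₗ[k] X) (μC : B ⊗[k] C →ₗ[k] C)
    (μM : B ⊗[k] M →ₗ[k] M) (n : ℕ) :
    (B ⊗[k] (B ⊗[k] (B ⊗[k] (B ⊗[k] B)))) ⊗[k] ((B ⊗[k] X) ⊗[k] ((W k C M n) ⊗[k] C))
      →ₗ[k] X ⊗[k] ((W k C M n) ⊗[k] C) :=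
  (TensorProduct.map μX ((TensorProduct.map (DW k B C M μC μM n) μC)
      ∘ₗ (TensorProduct.tensorTensorTensorComm k B B (W k C M n) C).toLinearMap))
    ∘ₗ (TensorProduct.assoc k (B ⊗[k] X) (B ⊗[k] B) ((W k C M n) ⊗[k] C)).toLinearMap
    ∘ₗ (TensorProduct.map (omegaMap (k := k) S') LinearMap.id)
    ∘ₗ (TensorProduct.assoc k (B ⊗[k] (B ⊗[k] (B ⊗[k] (B ⊗[k] B)))) (B ⊗[k] X)
          ((W k C M n) ⊗[k] C)).symm.toLinearMap

@[simp] lemma Psi_tmul (S' : B →ₗ[k] B) (μX : B ⊗[k] X →ₗ[k] X) (μC : B ⊗[k] C →ₗ[k] C)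
    (μM : B ⊗[k] M →ₗ[k] M) (n : ℕ) (p q u1 u2 u3 v : B) (x' : X) (w' : W k C M n) (c' : C) :
    Psi (k := k) S' μX μC μM n ((p ⊗ₜ (q ⊗ₜ (u1 ⊗ₜ (u2 ⊗ₜ u3)))) ⊗ₜ ((v ⊗ₜ x') ⊗ₜ (w' ⊗ₜ c')))
      = μX (u2 ⊗ₜ x') ⊗ₜ ((DW k B C M μC μM n (q ⊗ₜ w'))
          ⊗ₜ μC ((u1 * (v * (S' u3 * p))) ⊗ₜ c')) := by
  simp [Psi]

lemma sideL (S' : B →ₗ[k] B) (μX : B ⊗[k] X →ₗ[k] X) (ρX : X →ₗ[k] B ⊗[k] X)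
    (μC : B ⊗[k] C →ₗ[k] C) (μM : B ⊗[k] M →ₗ[k] M) (ρl : M →ₗ[k] C ⊗[k] M)
    (hAYD : ρX ∘ₗ μX = aydRHS k B X S' ρX μX)
    (hCmul : ∀ (b b' : B) (c : C), μC (b ⊗ₜ[k] μC (b' ⊗ₜ[k] c)) = μC ((b * b') ⊗ₜ[k] c))
    (hMequiL : ρl ∘ₗ μM
        = act2 k B μC μM ∘ₗ (TensorProduct.map (LinearMap.id : B →ₗ[k] B) ρl)) :
    ∀ (n : ℕ) (b : B) (x : X) (w : W k C M n),
      dLast k B X C M μC ρX ρl n (Ltw k B X C M μX μC μM n (b ⊗ₜ (x ⊗ₜ w)))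
        = Psi (k := k) S' μX μC μM n
            (((TensorProduct.assoc k B B (B ⊗[k] (B ⊗[k] B)))
                ((TensorProduct.map (Coalgebra.comul (R := k)) (comul3 k B))
                  (Coalgebra.comul (R := k) b)))
              ⊗ₜ ((ρX x) ⊗ₜ (lastM k C M ρl n w))) := by
  intro n b x w
  have hAYDpt : ∀ t : B ⊗[k] X, ρX (μX t) = aydRHS k B X S' ρX μX t :=
    fun t => congrArg (fun f => f t) hAYD
  rw [show Ltw k B X C M μX μC μM n (b ⊗ₜ (x ⊗ₜ w))
      = (TensorProduct.map μX (DW k B C M μC μM n))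
          ((TensorProduct.tensorTensorTensorComm k B B X (W k C M n))
            (((TensorProduct.comm k B B) (Coalgebra.comul (R := k) b)) ⊗ₜ (x ⊗ₜ w))) from rfl]
  generalize Coalgebra.comul (R := k) b = y
  induction y using TensorProduct.induction_on with
  | zero => simp
  | tmul b1 b2 =>
      simp only [TensorProduct.comm_tmul, TensorProduct.tensorTensorTensorComm_tmul,
        TensorProduct.map_tmul, LinearEquiv.coe_coe]
      rw [show dLast k B X C M μC ρX ρl n
            ((μX (b2 ⊗ₜ x)) ⊗ₜ (DW k B C M μC μM n (b1 ⊗ₜ w)))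
          = (TensorProduct.assoc k X (W k C M n) C).toLinearMap
              ((TensorProduct.comm k C (X ⊗[k] (W k C M n)))
                ((TensorProduct.map μC LinearMap.id)
                  ((TensorProduct.tensorTensorTensorComm k B X C (W k C M n))
                    ((TensorProduct.map LinearMap.id
                        (TensorProduct.comm k (W k C M n) C).toLinearMap)
                      ((ρX (μX (b2 ⊗ₜ x)))
                        ⊗ₜ (lastM k C M ρl n (DW k B C M μC μM n (b1 ⊗ₜ w)))))))) from rfl]
      rw [hAYDpt (b2 ⊗ₜ x), lemA μC μM ρl hMequiL n b1 w]
      rw [show aydRHS k B X S' ρX μX (b2 ⊗ₜ x)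
          = (TensorProduct.map (LinearMap.mul' k B) (LinearMap.id : X →ₗ[k] X))
              ((TensorProduct.assoc k B B X).symm
                ((TensorProduct.map (LinearMap.mul' k B)
                    ((TensorProduct.map S' μX)
                      ∘ₗ (TensorProduct.assoc k B B X).toLinearMap
                      ∘ₗ (TensorProduct.map (TensorProduct.comm k B B).toLinearMap
                            (LinearMap.id : X →ₗ[k] X))))
                  ((TensorProduct.tensorTensorTensorComm k B (B ⊗[k] B) B X)
                    ((comul3 k B b2) ⊗ₜ (ρX x))))) from rfl]
      simp only [TensorProduct.map_tmul]
      generalize comul3 k B b2 = t2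
      generalize Coalgebra.comul (R := k) b1 = y1
      generalize (ρX x : B ⊗[k] X) = r
      generalize (lastM k C M ρl n w : (W k C M n : Type u) ⊗[k] C) = s
      induction y1 using TensorProduct.induction_on with
      | zero => simp
      | tmul p q =>
          induction t2 using TensorProduct.induction_on with
          | zero => simp
          | tmul u1 z2 =>
              induction z2 using TensorProduct.induction_on with
              | zero => simp
              | tmul u2 u3 =>
                  induction r using TensorProduct.induction_on with
                  | zero => simp
                  | tmul v x' =>
                      induction s using TensorProduct.induction_on with
                      | zero => simp
                      | tmul w' c' => simp [hCmul, mul_assoc]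
                      | add s1 s2 h1 h2 => simp only [tmul_add, add_tmul, map_add, h1, h2]
                  | add r1 r2 h1 h2 => simp only [tmul_add, add_tmul, map_add, h1, h2]
              | add z1 z2 h1 h2 => simp only [tmul_add, add_tmul, map_add, h1, h2]
          | add t1 t2 h1 h2 => simp only [tmul_add, add_tmul, map_add, h1, h2]
      | add y1 y2 h1 h2 => simp only [tmul_add, add_tmul, map_add, h1, h2]
  | add y1 y2 h1 h2 => simp only [add_tmul, map_add, h1, h2]

/-- `a2 ⊗ a3 ↦ f1 ⊗ (f2 ⊗ (e2 ⊗ a3))` splitting `a2` twice on the left. -/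
def gMap : B ⊗[k] B →ₗ[k] B ⊗[k] (B ⊗[k] (B ⊗[k] B)) :=
  (TensorProduct.assoc k B B (B ⊗[k] B)).toLinearMap
    ∘ₗ (TensorProduct.assoc k (B ⊗[k] B) B B).toLinearMap
    ∘ₗ (TensorProduct.map ((TensorProduct.map (Coalgebra.comul (R := k)) LinearMap.id)
          ∘ₗ (Coalgebra.comul (R := k) (A := B))) LinearMap.id)

lemma sideR (S' : B →ₗ[k] B) (μX : B ⊗[k] X →ₗ[k] X) (ρX : X →ₗ[k] B ⊗[k] X)
    (μC : B ⊗[k] C →ₗ[k] C) (μM : B ⊗[k] M →ₗ[k] M) (ρl : M →ₗ[k] C ⊗[k] M)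
    (hCmul : ∀ (b b' : B) (c : C), μC (b ⊗ₜ[k] μC (b' ⊗ₜ[k] c)) = μC ((b * b') ⊗ₜ[k] c)) :
    ∀ (n : ℕ) (b : B) (x : X) (w : W k C M n),
      Theta (k := k) S' μX μC μM ρX ρl n ((comul3 k B b) ⊗ₜ (x ⊗ₜ w))
        = Psi (k := k) S' μX μC μM n
            (((TensorProduct.map LinearMap.id (gMap (k := k) (B := B))) (comul3 k B b))
              ⊗ₜ ((ρX x) ⊗ₜ (lastM k C M ρl n w))) := by
  intro n b x w
  have LtwEq : ∀ (a : B) (η : X ⊗[k] (W k C M (n+1))),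
      Ltw k B X C M μX μC μM (n+1) (a ⊗ₜ η)
        = (TensorProduct.map μX (DW k B C M μC μM (n+1)))
            ((TensorProduct.tensorTensorTensorComm k B B X (W k C M (n+1)))
              (((TensorProduct.comm k B B) (Coalgebra.comul (R := k) a)) ⊗ₜ η)) :=
    fun _ _ => rfl
  have DWEq : ∀ (a : B) (z : (W k C M n : Type u) ⊗[k] C),
      DW k B C M μC μM (n+1) (a ⊗ₜ z)
        = (TensorProduct.map (DW k B C M μC μM n) μC)
            ((TensorProduct.tensorTensorTensorComm k B B (W k C M n) C)
              ((Coalgebra.comul (R := k) a) ⊗ₜ z)) :=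
    fun _ _ => rfl
  generalize comul3 k B b = t
  induction t using TensorProduct.induction_on with
  | zero => simp [Theta]
  | tmul a1 z =>
      induction z using TensorProduct.induction_on with
      | zero => simp [Theta]
      | tmul a2 a3 =>
          rw [show Theta (k := k) S' μX μC μM ρX ρl n ((a1 ⊗ₜ (a2 ⊗ₜ a3)) ⊗ₜ (x ⊗ₜ w))
              = Ltw k B X C M μX μC μM (n+1)
                  (a2 ⊗ₜ (Phi (k := k) μC ρX ρl n ((S' a3 * a1) ⊗ₜ (x ⊗ₜ w)))) from by
            simp [Theta]]
          rw [Phi_tmul, LtwEq]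
          simp only [TensorProduct.map_tmul, LinearMap.comp_apply, LinearEquiv.coe_coe,
            LinearMap.id_coe, id_eq, gMap]
          generalize Coalgebra.comul (R := k) a2 = y2
          generalize (ρX x : B ⊗[k] X) = r
          generalize (lastM k C M ρl n w : (W k C M n : Type u) ⊗[k] C) = s
          induction y2 using TensorProduct.induction_on with
          | zero => simp
          | tmul e1 e2 =>
              induction r using TensorProduct.induction_on with
              | zero => simp
              | tmul v x' =>
                  induction s using TensorProduct.induction_on with
                  | zero => simp
                  | tmul w' c' =>
                      rw [Phi_tmul_pure μC ρX ρl]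
                      simp only [TensorProduct.comm_tmul,
                        TensorProduct.tensorTensorTensorComm_tmul, TensorProduct.map_tmul,
                        LinearEquiv.coe_coe]
                      rw [DWEq]
                      generalize Coalgebra.comul (R := k) e1 = y3
                      induction y3 using TensorProduct.induction_on with
                      | zero => simp
                      | tmul f1 f2 => simp [hCmul, mul_assoc]
                      | add p q h1 h2 => simp only [tmul_add, add_tmul, map_add, h1, h2]
                  | add s1 s2 h1 h2 => simp only [tmul_add, add_tmul, map_add, h1, h2]
              | add r1 r2 h1 h2 => simp only [tmul_add, add_tmul, map_add, h1, h2]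
          | add p q h1 h2 => simp only [tmul_add, add_tmul, map_add, h1, h2]
      | add z1 z2 h1 h2 => simp only [tmul_add, add_tmul, map_add, h1, h2]
  | add t1 t2 h1 h2 => simp only [add_tmul, map_add, h1, h2]

lemma coLR (b : B) :
    (TensorProduct.assoc k B B (B ⊗[k] (B ⊗[k] B)))
        ((TensorProduct.map (Coalgebra.comul (R := k)) (comul3 k B))
          (Coalgebra.comul (R := k) b))
      = (TensorProduct.map LinearMap.id (gMap (k := k) (B := B))) (comul3 k B b) := by
  have hco3 : ∀ a : B,
      (TensorProduct.map (Coalgebra.comul (R := k) (A := B)) LinearMap.id)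
          (Coalgebra.comul (R := k) a)
        = (TensorProduct.assoc k B B B).symm (comul3 k B a) := by
    intro a
    have h := Coalgebra.coassoc_symm_apply (R := k) (A := B) a
    simpa [LinearMap.rTensor, LinearMap.lTensor, comul3] using h.symm
  have e1 : ∀ y : B ⊗[k] B,
      (TensorProduct.map (Coalgebra.comul (R := k)) (comul3 k B)) y
        = (TensorProduct.map LinearMap.id (comul3 k B))
            ((TensorProduct.map (Coalgebra.comul (R := k)) LinearMap.id) y) := by
    intro y
    induction y using TensorProduct.induction_on with
    | zero => simp
    | tmul b1 b2 => simp
    | add y1 y2 h1 h2 => simp only [map_add, h1, h2]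
  have NL : ∀ u : B ⊗[k] (B ⊗[k] B),
      (TensorProduct.assoc k B B (B ⊗[k] (B ⊗[k] B)))
          ((TensorProduct.map LinearMap.id (comul3 k B))
            ((TensorProduct.assoc k B B B).symm u))
        = (TensorProduct.map LinearMap.id (TensorProduct.map LinearMap.id (comul3 k B))) u := by
    intro u
    induction u using TensorProduct.induction_on with
    | zero => simp
    | tmul a z =>
        induction z using TensorProduct.induction_on with
        | zero => simp
        | tmul a2 a3 => simp
        | add z1 z2 h1 h2 => simp only [tmul_add, map_add, h1, h2]
    | add u1 u2 h1 h2 => simp only [map_add, h1, h2]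
  have claimg : ∀ a : B,
      gMap (k := k) (B := B) (Coalgebra.comul (R := k) a)
        = (TensorProduct.map LinearMap.id (comul3 k B)) (Coalgebra.comul (R := k) a) := by
    intro a
    have q1 : ∀ y : B ⊗[k] B,
        gMap (k := k) (B := B) y
          = (TensorProduct.assoc k B B (B ⊗[k] B))
              ((TensorProduct.assoc k (B ⊗[k] B) B B)
                ((TensorProduct.map
                    (TensorProduct.map (Coalgebra.comul (R := k)) LinearMap.id) LinearMap.id)
                  ((TensorProduct.map (Coalgebra.comul (R := k)) LinearMap.id) y))) := by
      intro y
      induction y using TensorProduct.induction_on with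
      | zero => simp [gMap]
      | tmul a2 a3 => simp [gMap]
      | add y1 y2 h1 h2 => simp only [map_add, h1, h2]
    have N1 : ∀ u : B ⊗[k] (B ⊗[k] B),
        (TensorProduct.assoc k (B ⊗[k] B) B B)
            ((TensorProduct.map
                (TensorProduct.map (Coalgebra.comul (R := k)) LinearMap.id) LinearMap.id)
              ((TensorProduct.assoc k B B B).symm u))
          = (TensorProduct.map (Coalgebra.comul (R := k))
              (LinearMap.id : B ⊗[k] B →ₗ[k] B ⊗[k] B)) u := by
      intro u
      induction u using TensorProduct.induction_on with
      | zero => simp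
      | tmul a z =>
          induction z using TensorProduct.induction_on with
          | zero => simp
          | tmul a2 a3 => simp
          | add z1 z2 h1 h2 => simp only [tmul_add, map_add, h1, h2]
      | add u1 u2 h1 h2 => simp only [map_add, h1, h2]
    have q2 : ∀ y : B ⊗[k] B,
        (TensorProduct.map (Coalgebra.comul (R := k))
            (LinearMap.id : B ⊗[k] B →ₗ[k] B ⊗[k] B))
            ((TensorProduct.map LinearMap.id (Coalgebra.comul (R := k))) y)
          = (TensorProduct.map (LinearMap.id : B ⊗[k] B →ₗ[k] B ⊗[k] B)
              (Coalgebra.comul (R := k)))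
              ((TensorProduct.map (Coalgebra.comul (R := k)) LinearMap.id) y) := by
      intro y
      induction y using TensorProduct.induction_on with
      | zero => simp
      | tmul b1 b2 => simp
      | add y1 y2 h1 h2 => simp only [map_add, h1, h2]
    have N2 : ∀ u : B ⊗[k] (B ⊗[k] B),
        (TensorProduct.assoc k B B (B ⊗[k] B))
            ((TensorProduct.map (LinearMap.id : B ⊗[k] B →ₗ[k] B ⊗[k] B)
                (Coalgebra.comul (R := k)))
              ((TensorProduct.assoc k B B B).symm u))
          = (TensorProduct.map LinearMap.id
              (TensorProduct.map LinearMap.id (Coalgebra.comul (R := k)))) u := by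
      intro u
      induction u using TensorProduct.induction_on with
      | zero => simp
      | tmul a z =>
          induction z using TensorProduct.induction_on with
          | zero => simp
          | tmul a2 a3 => simp
          | add z1 z2 h1 h2 => simp only [tmul_add, map_add, h1, h2]
      | add u1 u2 h1 h2 => simp only [map_add, h1, h2]
    have q3 : ∀ y : B ⊗[k] B,
        (TensorProduct.map LinearMap.id
            (TensorProduct.map LinearMap.id (Coalgebra.comul (R := k))))
            ((TensorProduct.map LinearMap.id (Coalgebra.comul (R := k))) y)
          = (TensorProduct.map LinearMap.id (comul3 k B)) y := by
      intro y
      induction y using TensorProduct.induction_on with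
      | zero => simp
      | tmul b1 b2 => simp [comul3]
      | add y1 y2 h1 h2 => simp only [map_add, h1, h2]
    rw [q1 (Coalgebra.comul (R := k) a), hco3 a, N1 (comul3 k B a),
      show comul3 k B a
        = (TensorProduct.map LinearMap.id (Coalgebra.comul (R := k)))
            (Coalgebra.comul (R := k) a) from rfl,
      q2 (Coalgebra.comul (R := k) a), hco3 a, N2 (comul3 k B a),
      show comul3 k B a
        = (TensorProduct.map LinearMap.id (Coalgebra.comul (R := k)))
            (Coalgebra.comul (R := k) a) from rfl,
      q3 (Coalgebra.comul (R := k) a)]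
  have e2 : ∀ y : B ⊗[k] B,
      (TensorProduct.map LinearMap.id (gMap (k := k) (B := B)))
          ((TensorProduct.map LinearMap.id (Coalgebra.comul (R := k))) y)
        = (TensorProduct.map LinearMap.id (TensorProduct.map LinearMap.id (comul3 k B)))
            ((TensorProduct.map LinearMap.id (Coalgebra.comul (R := k))) y) := by
    intro y
    induction y using TensorProduct.induction_on with
    | zero => simp
    | tmul b1 b2 => simp only [TensorProduct.map_tmul, LinearMap.id_coe, id_eq, claimg b2]
    | add y1 y2 h1 h2 => simp only [map_add, h1, h2]
  rw [e1 (Coalgebra.comul (R := k) b), hco3 b, NL (comul3 k B b),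
    show comul3 k B b
      = (TensorProduct.map LinearMap.id (Coalgebra.comul (R := k)))
          (Coalgebra.comul (R := k) b) from rfl,
    e2 (Coalgebra.comul (R := k) b)]

lemma mainEq (S' : B →ₗ[k] B) (μX : B ⊗[k] X →ₗ[k] X) (ρX : X →ₗ[k] B ⊗[k] X)
    (μC : B ⊗[k] C →ₗ[k] C) (μM : B ⊗[k] M →ₗ[k] M) (ρl : M →ₗ[k] C ⊗[k] M)
    (hAYD : ρX ∘ₗ μX = aydRHS k B X S' ρX μX)
    (hCmul : ∀ (b b' : B) (c : C), μC (b ⊗ₜ[k] μC (b' ⊗ₜ[k] c)) = μC ((b * b') ⊗ₜ[k] c))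
    (hMequiL : ρl ∘ₗ μM
        = act2 k B μC μM ∘ₗ (TensorProduct.map (LinearMap.id : B →ₗ[k] B) ρl)) :
    ∀ (n : ℕ) (b : B) (ξ : X ⊗[k] (W k C M n)),
      dLast k B X C M μC ρX ρl n (Ltw k B X C M μX μC μM n (b ⊗ₜ ξ))
        = Theta (k := k) S' μX μC μM ρX ρl n ((comul3 k B b) ⊗ₜ ξ) := by
  intro n b ξ
  induction ξ using TensorProduct.induction_on with
  | zero => simp [Theta]
  | tmul x w =>
      rw [sideL S' μX ρX μC μM ρl hAYD hCmul hMequiL n b x w,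
        sideR S' μX ρX μC μM ρl hCmul n b x w, coLR b]
  | add z1 z2 h1 h2 => simp only [tmul_add, map_add, h1, h2]

lemma lemQ (μX : B ⊗[k] X →ₗ[k] X) (μC : B ⊗[k] C →ₗ[k] C) (μM : B ⊗[k] M →ₗ[k] M)
    (n : ℕ) (a : B) (η : X ⊗[k] (W k C M (n + 1))) :
    (coinvTw k B X C M μX μC μM (n + 1)).mkQ (Ltw k B X C M μX μC μM (n + 1) (a ⊗ₜ η))
      = (Coalgebra.counit (R := k) a) • (coinvTw k B X C M μX μC μM (n + 1)).mkQ η := by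
  have hmem : Ltw k B X C M μX μC μM (n + 1) (a ⊗ₜ η)
      - (Coalgebra.counit (R := k) a) • η ∈ coinvTw k B X C M μX μC μM (n + 1) :=
    Submodule.subset_span ⟨a, η, rfl⟩
  have h := (Submodule.Quotient.mk_eq_zero _).2 hmem
  rw [← Submodule.mkQ_apply, map_sub, map_smul, sub_eq_zero] at h
  exact h

/-- `u1 ⊗ (u2 ⊗ u3) ↦ ε u2 • (S' u3 * u1)`. -/
def nuEps (S' : B →ₗ[k] B) : B ⊗[k] (B ⊗[k] B) →ₗ[k] B :=
  (TensorProduct.lid k B).toLinearMap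
    ∘ₗ (TensorProduct.map (Coalgebra.counit (R := k)) LinearMap.id)
    ∘ₗ nuMap (k := k) S'

@[simp] lemma nuEps_tmul (S' : B →ₗ[k] B) (u1 u2 u3 : B) :
    nuEps (k := k) S' (u1 ⊗ₜ (u2 ⊗ₜ u3))
      = (Coalgebra.counit (R := k) u2) • (S' u3 * u1) := by
  simp [nuEps]

lemma claimQ (S' : B →ₗ[k] B) (μX : B ⊗[k] X →ₗ[k] X) (ρX : X →ₗ[k] B ⊗[k] X)
    (μC : B ⊗[k] C →ₗ[k] C) (μM : B ⊗[k] M →ₗ[k] M) (ρl : M →ₗ[k] C ⊗[k] M)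
    (n : ℕ) (ξ : X ⊗[k] (W k C M n)) :
    ∀ u : B ⊗[k] (B ⊗[k] B),
      (coinvTw k B X C M μX μC μM (n + 1)).mkQ (Theta (k := k) S' μX μC μM ρX ρl n (u ⊗ₜ ξ))
        = (coinvTw k B X C M μX μC μM (n + 1)).mkQ
            (Phi (k := k) μC ρX ρl n ((nuEps (k := k) S' u) ⊗ₜ ξ)) := by
  intro u
  induction u using TensorProduct.induction_on with
  | zero => simp [Theta]
  | tmul u1 z =>
      induction z using TensorProduct.induction_on with
      | zero => simp [Theta]
      | tmul u2 u3 =>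
          rw [show Theta (k := k) S' μX μC μM ρX ρl n ((u1 ⊗ₜ (u2 ⊗ₜ u3)) ⊗ₜ ξ)
              = Ltw k B X C M μX μC μM (n + 1)
                  (u2 ⊗ₜ (Phi (k := k) μC ρX ρl n ((S' u3 * u1) ⊗ₜ ξ))) from by
            simp [Theta]]
          rw [lemQ, nuEps_tmul, ← smul_tmul', ← map_smul, ← map_smul, smul_tmul']
      | add z1 z2 h1 h2 => simp only [tmul_add, add_tmul, map_add, h1, h2]
  | add u1 u2 h1 h2 => simp only [add_tmul, map_add, h1, h2]

lemma claimNu (S' : B →ₗ[k] B)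
    (hS'l : S' ∘ₗ (HopfAlgebra.antipode (R := k) (A := B)) = LinearMap.id)
    (hS'r : (HopfAlgebra.antipode (R := k) (A := B)) ∘ₗ S' = LinearMap.id) (b : B) :
    nuEps (k := k) S' (comul3 k B b) = (Coalgebra.counit (R := k) b) • (1 : B) := by
  have claim2 : ∀ y : B ⊗[k] B,
      nuEps (k := k) S'
          ((TensorProduct.map LinearMap.id (Coalgebra.comul (R := k))) y)
        = LinearMap.mul' k B ((TensorProduct.map S' LinearMap.id)
            ((TensorProduct.comm k B B) y)) := by
    intro y
    induction y using TensorProduct.induction_on with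
    | zero => simp
    | tmul b1 c =>
        have inner : ∀ z : B ⊗[k] B,
            nuEps (k := k) S' (b1 ⊗ₜ z)
              = LinearMap.mul' k B
                  ((S' ((TensorProduct.lid k B)
                      ((TensorProduct.map (Coalgebra.counit (R := k)) LinearMap.id) z))) ⊗ₜ b1) := by
          intro z
          induction z using TensorProduct.induction_on with
          | zero => simp
          | tmul c1 c2 => simp [mul_smul_comm, smul_mul_assoc]
          | add z1 z2 h1 h2 => simp only [tmul_add, add_tmul, map_add, h1, h2]
        rw [TensorProduct.map_tmul, LinearMap.id_coe, id_eq, inner (Coalgebra.comul (R := k) c)]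
        have hc : (TensorProduct.map (Coalgebra.counit (R := k)) (LinearMap.id : B →ₗ[k] B))
            (Coalgebra.comul (R := k) c) = (1 : k) ⊗ₜ c := by
          have := Coalgebra.rTensor_counit_comul (R := k) c
          simpa [LinearMap.rTensor] using this
        rw [hc]
        simp
    | add y1 y2 h1 h2 => simp only [map_add, h1, h2]
  have h := claim2 (Coalgebra.comul (R := k) b)
  rw [show (TensorProduct.map LinearMap.id (Coalgebra.comul (R := k)))
      (Coalgebra.comul (R := k) b) = comul3 k B b from rfl] at h
  rw [h, keyS k B S' hS'l hS'r b]

lemma claimPhiOne (μC : B ⊗[k] C →ₗ[k] C) (ρX : X →ₗ[k] B ⊗[k] X) (ρl : M →ₗ[k] C ⊗[k] M)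
    (n : ℕ) (x : X) (w : W k C M n) :
    Phi (k := k) μC ρX ρl n ((1 : B) ⊗ₜ (x ⊗ₜ w)) = dLast k B X C M μC ρX ρl n (x ⊗ₜ w) := by
  rw [Phi_tmul]
  rw [show dLast k B X C M μC ρX ρl n (x ⊗ₜ w)
      = (TensorProduct.assoc k X (W k C M n) C).toLinearMap
          ((TensorProduct.comm k C (X ⊗[k] (W k C M n)))
            ((TensorProduct.map μC LinearMap.id)
              ((TensorProduct.tensorTensorTensorComm k B X C (W k C M n))
                ((TensorProduct.map LinearMap.id
                    (TensorProduct.comm k (W k C M n) C).toLinearMap)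
                  ((ρX x) ⊗ₜ (lastM k C M ρl n w)))))) from rfl]
  generalize (ρX x : B ⊗[k] X) = r
  generalize (lastM k C M ρl n w : (W k C M n : Type u) ⊗[k] C) = s
  induction r using TensorProduct.induction_on with
  | zero => simp
  | tmul v x' =>
      induction s using TensorProduct.induction_on with
      | zero => simp
      | tmul w' c' =>
          rw [Phi_tmul_pure μC ρX ρl]
          simp [mul_one]
      | add s1 s2 h1 h2 => simp only [tmul_add, add_tmul, map_add, h1, h2]
  | add r1 r2 h1 h2 => simp only [tmul_add, add_tmul, map_add, h1, h2]


lemma finalMain (S' : B →ₗ[k] B)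
    (hS'l : S' ∘ₗ (HopfAlgebra.antipode (R := k) (A := B)) = LinearMap.id)
    (hS'r : (HopfAlgebra.antipode (R := k) (A := B)) ∘ₗ S' = LinearMap.id)
    (μX : B ⊗[k] X →ₗ[k] X) (ρX : X →ₗ[k] B ⊗[k] X)
    (μC : B ⊗[k] C →ₗ[k] C) (μM : B ⊗[k] M →ₗ[k] M) (ρl : M →ₗ[k] C ⊗[k] M)
    (hAYD : ρX ∘ₗ μX = aydRHS k B X S' ρX μX)
    (hCmul : ∀ (b b' : B) (c : C), μC (b ⊗ₜ[k] μC (b' ⊗ₜ[k] c)) = μC ((b * b') ⊗ₜ[k] c))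
    (hMequiL : ρl ∘ₗ μM
        = act2 k B μC μM ∘ₗ (TensorProduct.map (LinearMap.id : B →ₗ[k] B) ρl)) :
    ∀ (n : ℕ) (b : B) (ξ : X ⊗[k] (W k C M n)),
      (coinvTw k B X C M μX μC μM (n + 1)).mkQ
          (dLast k B X C M μC ρX ρl n (Ltw k B X C M μX μC μM n (b ⊗ₜ[k] ξ)))
        = (Coalgebra.counit (R := k) b) •
            (coinvTw k B X C M μX μC μM (n + 1)).mkQ (dLast k B X C M μC ρX ρl n ξ) := by
  intro n b ξ
  induction ξ using TensorProduct.induction_on with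
  | zero => simp
  | tmul x w =>
      rw [mainEq S' μX ρX μC μM ρl hAYD hCmul hMequiL n b (x ⊗ₜ w)]
      rw [claimQ S' μX ρX μC μM ρl n (x ⊗ₜ w) (comul3 k B b)]
      rw [claimNu S' hS'l hS'r b]
      rw [← smul_tmul']
      simp only [map_smul]
      rw [claimPhiOne μC ρX ρl n x w]
  | add z1 z2 h1 h2 =>
      simp only [tmul_add, map_add, h1, h2, smul_add]

end Aux

theorem stmt17 (S' : B →ₗ[k] B)
    (hS'l : S' ∘ₗ (HopfAlgebra.antipode (R := k) (A := B)) = LinearMap.id)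
    (hS'r : (HopfAlgebra.antipode (R := k) (A := B)) ∘ₗ S' = LinearMap.id)
    (μX : B ⊗[k] X →ₗ[k] X) (ρX : X →ₗ[k] B ⊗[k] X)
    (μC : B ⊗[k] C →ₗ[k] C) (μM : B ⊗[k] M →ₗ[k] M)
    (ρl : M →ₗ[k] C ⊗[k] M) (ρr : M →ₗ[k] M ⊗[k] C)
    -- X is a B-module and B-comodule
    (hXone : ∀ x : X, μX ((1 : B) ⊗ₜ[k] x) = x)
    (hXmul : ∀ (b b' : B) (x : X), μX (b ⊗ₜ[k] μX (b' ⊗ₜ[k] x)) = μX ((b * b') ⊗ₜ[k] x))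
    (hXcounit : (TensorProduct.lid k X).toLinearMap
        ∘ₗ (TensorProduct.map (Coalgebra.counit (R := k) (A := B)) (LinearMap.id : X →ₗ[k] X))
        ∘ₗ ρX = LinearMap.id)
    (hXcoassoc : (TensorProduct.assoc k B B X).toLinearMap
        ∘ₗ (TensorProduct.map (Coalgebra.comul (R := k) (A := B)) (LinearMap.id : X →ₗ[k] X))
        ∘ₗ ρX = (TensorProduct.map (LinearMap.id : B →ₗ[k] B) ρX) ∘ₗ ρX)
    -- X satisfies the anti-Yetter-Drinfeld condition
    (hAYD : ρX ∘ₗ μX = aydRHS k B X S' ρX μX)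
    -- C is a B-module coalgebra
    (hCone : ∀ c : C, μC ((1 : B) ⊗ₜ[k] c) = c)
    (hCmul : ∀ (b b' : B) (c : C), μC (b ⊗ₜ[k] μC (b' ⊗ₜ[k] c)) = μC ((b * b') ⊗ₜ[k] c))
    (hCcomul : (Coalgebra.comul (R := k) (A := C)) ∘ₗ μC
        = act2 k B μC μC ∘ₗ (TensorProduct.map (LinearMap.id : B →ₗ[k] B)
            (Coalgebra.comul (R := k) (A := C))))
    (hCcounit : (Coalgebra.counit (R := k) (A := C)) ∘ₗ μC
        = (LinearMap.mul' k k) ∘ₗ (TensorProduct.map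
            (Coalgebra.counit (R := k) (A := B)) (Coalgebra.counit (R := k) (A := C))))
    -- M is a B-module and a C-bicomodule
    (hMone : ∀ m : M, μM ((1 : B) ⊗ₜ[k] m) = m)
    (hMmul : ∀ (b b' : B) (m : M), μM (b ⊗ₜ[k] μM (b' ⊗ₜ[k] m)) = μM ((b * b') ⊗ₜ[k] m))
    (hMl : (TensorProduct.assoc k C C M).toLinearMap
        ∘ₗ (TensorProduct.map (Coalgebra.comul (R := k) (A := C)) (LinearMap.id : M →ₗ[k] M))
        ∘ₗ ρl = (TensorProduct.map (LinearMap.id : C →ₗ[k] C) ρl) ∘ₗ ρl)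
    (hMr : (TensorProduct.map (LinearMap.id : M →ₗ[k] M) (Coalgebra.comul (R := k) (A := C)))
        ∘ₗ ρr = (TensorProduct.assoc k M C C).toLinearMap
          ∘ₗ (TensorProduct.map ρr (LinearMap.id : C →ₗ[k] C)) ∘ₗ ρr)
    (hMlr : (TensorProduct.assoc k C M C).toLinearMap
        ∘ₗ (TensorProduct.map ρl (LinearMap.id : C →ₗ[k] C)) ∘ₗ ρr
        = (TensorProduct.map (LinearMap.id : C →ₗ[k] C) ρr) ∘ₗ ρl)
    -- the C-coactions on M are B-equivariant
    (hMequiL : ρl ∘ₗ μM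
        = act2 k B μC μM ∘ₗ (TensorProduct.map (LinearMap.id : B →ₗ[k] B) ρl))
    (hMequiR : ρr ∘ₗ μM
        = act2 k B μM μC ∘ₗ (TensorProduct.map (LinearMap.id : B →ₗ[k] B) ρr)) :
    ∀ (n : ℕ) (b : B) (ξ : X ⊗[k] (W k C M n)),
      (coinvTw k B X C M μX μC μM (n + 1)).mkQ
          (dLast k B X C M μC ρX ρl n (Ltw k B X C M μX μC μM n (b ⊗ₜ[k] ξ)))
        = (Coalgebra.counit (R := k) b) •
            (coinvTw k B X C M μX μC μM (n + 1)).mkQ (dLast k B X C M μC ρX ρl n ξ) :=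
  finalMain S' hS'l hS'r μX ρX μC μM ρl hAYD hCmul hMequiL


end
end
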